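/- There exist 3×3 rank-2 matrices A₁, A₂ with shared left singular direction e₁ such that e₁ is not an eigenvector of (A₁A₁ᵀ + A₂A₂ᵀ)/2. Concretely, for ε > 0, let A₁ = e₁e₁ᵀ + ε·(e₂−e₃)(e₁+e₂+e₃)ᵀ and A₂ = e₁e₁ᵀ + ε·(e₂+e₃)(e₁+e₂+e₃)ᵀ. Then (A₁A₁ᵀ + A₂A₂ᵀ)/2 equals the matrix [[1, ε, 0],[ε, 3ε², 0],[0,0,3ε²]], and e₁ = (1,0,0)ᵀ is not an eigenvector of this matrix. -/

import Mathlib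

open Matrix
set_option maxHeartbeats 1000000

lemma rank_eq_two_aux (M : Matrix (Fin 3) (Fin 3) ℝ)
    (B : Matrix (Fin 3) (Fin 2) ℝ) (C : Matrix (Fin 2) (Fin 3) ℝ)
    (hBC : M = B * C)
    (L : Matrix (Fin 2) (Fin 3) ℝ) (R : Matrix (Fin 3) (Fin 2) ℝ)
    (hdet : IsUnit (L * M * R).det) : M.rank = 2 := by
  have h1 : M.rank ≤ 2 := by
    calc M.rank ≤ C.rank := hBC ▸ Matrix.rank_mul_le_right B C
    _ ≤ Fintype.card (Fin 2) := Matrix.rank_le_card_height C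
    _ = 2 := rfl
  have h2 : 2 ≤ M.rank := by
    have h3 : (L * M * R).rank = 2 :=
      Matrix.rank_of_isUnit _ ((Matrix.isUnit_iff_isUnit_det _).mpr hdet)
    calc 2 = (L * M * R).rank := h3.symm
    _ ≤ (M * R).rank := by
        rw [Matrix.mul_assoc]; exact Matrix.rank_mul_le_right L (M * R)
    _ ≤ M.rank := Matrix.rank_mul_le_left M R
  omega

theorem stacked_svd_counterexample (ε : ℝ) (hε : 0 < ε)
    (e₁ e₂ e₃ : Fin 3 → ℝ)
    (he₁ : e₁ = ![1, 0, 0]) (he₂ : e₂ = ![0, 1, 0]) (he₃ : e₃ = ![0, 0, 1])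
    (A₁ A₂ : Matrix (Fin 3) (Fin 3) ℝ)
    (hA₁ : A₁ = Matrix.vecMulVec e₁ e₁ + ε • Matrix.vecMulVec (e₂ - e₃) (e₁ + e₂ + e₃))
    (hA₂ : A₂ = Matrix.vecMulVec e₁ e₁ + ε • Matrix.vecMulVec (e₂ + e₃) (e₁ + e₂ + e₃)) :
    A₁.rank = 2 ∧ A₂.rank = 2 ∧
    (1 / 2 : ℝ) • (A₁ * A₁ᵀ + A₂ * A₂ᵀ)
      = !![1, ε, 0; ε, 3 * ε ^ 2, 0; 0, 0, 3 * ε ^ 2] ∧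
    ¬ ∃ lam : ℝ, ((1 / 2 : ℝ) • (A₁ * A₁ᵀ + A₂ * A₂ᵀ)).mulVec e₁ = lam • e₁ := by
  subst he₁ he₂ he₃
  have hA₁' : A₁ = !![1,0,0; ε,ε,ε; -ε,-ε,-ε] := by
    rw [hA₁]; ext i j; fin_cases i <;> fin_cases j <;>
      simp [Matrix.vecMulVec_apply, Matrix.vecHead, Matrix.vecTail] <;> ring
  have hA₂' : A₂ = !![1,0,0; ε,ε,ε; ε,ε,ε] := by
    rw [hA₂]; ext i j; fin_cases i <;> fin_cases j <;>
      simp [Matrix.vecMulVec_apply, Matrix.vecHead, Matrix.vecTail] <;> ring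
  have hM : (1 / 2 : ℝ) • (A₁ * A₁ᵀ + A₂ * A₂ᵀ)
      = !![1, ε, 0; ε, 3 * ε ^ 2, 0; 0, 0, 3 * ε ^ 2] := by
    rw [hA₁', hA₂']
    ext i j
    fin_cases i <;> fin_cases j <;>
      simp [Matrix.mul_apply, Matrix.vecMul, dotProduct, Fin.sum_univ_succ, Matrix.vecHead, Matrix.vecTail] <;> ring
  refine ⟨?_, ?_, hM, ?_⟩
  · refine rank_eq_two_aux A₁ !![1,0;0,1;0,-1] !![1,0,0; ε,ε,ε] ?_
      !![(1:ℝ),0,0;0,1,0] !![(1:ℝ),0;0,1;0,0] ?_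
    · rw [hA₁']; ext i j; fin_cases i <;> fin_cases j <;>
        simp [Matrix.mul_apply, Fin.sum_univ_succ, Matrix.vecHead, Matrix.vecTail]
    · have h4 : !![(1:ℝ),0,0;0,1,0] * A₁ * !![(1:ℝ),0;0,1;0,0] = !![1,0; ε,ε] := by
        rw [hA₁']; ext i j; fin_cases i <;> fin_cases j <;>
          simp [Matrix.mul_apply, Fin.sum_univ_succ, Matrix.vecHead, Matrix.vecTail]
      rw [h4, Matrix.det_fin_two_of]
      simpa using hε.ne'.isUnit
  · refine rank_eq_two_aux A₂ !![1,0;0,1;0,1] !![1,0,0; ε,ε,ε] ?_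
      !![(1:ℝ),0,0;0,1,0] !![(1:ℝ),0;0,1;0,0] ?_
    · rw [hA₂']; ext i j; fin_cases i <;> fin_cases j <;>
        simp [Matrix.mul_apply, Fin.sum_univ_succ, Matrix.vecHead, Matrix.vecTail]
    · have h4 : !![(1:ℝ),0,0;0,1,0] * A₂ * !![(1:ℝ),0;0,1;0,0] = !![1,0; ε,ε] := by
        rw [hA₂']; ext i j; fin_cases i <;> fin_cases j <;>
          simp [Matrix.mul_apply, Fin.sum_univ_succ, Matrix.vecHead, Matrix.vecTail]
      rw [h4, Matrix.det_fin_two_of]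
      simpa using hε.ne'.isUnit
  · rintro ⟨lam, h⟩
    rw [hM] at h
    have h1 := congrFun h 1
    simp [Matrix.mulVec, dotProduct, Fin.sum_univ_succ, Matrix.vecHead,
      Matrix.vecTail] at h1
    exact hε.ne' h1
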